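/- arXiv:1701.08266 — 3 statements merged into one kernel-verified Lean document; each statement's English description precedes it below -/
import Mathlib

section
/- Fix μ > 0, a = b = 7/2, a positive integer K, and T ∈ ℕ with (T:ℝ) > 2/(K·a − 2). Then the user blocking probability satisfies the strict lower bound P_b(K,T) > P_K(T+1) / ((T+1)·(1−λ)²), where λ = μ/(μ + b). -/
open scoped BigOperators

/-- The distribution of the number of users in the coverage of a cluster of `K` RRUs:
`P_K(n) = b^{Ka} μ^n Γ(n + Ka) / ((μ + b)^{Ka+n} Γ(Ka) n!)` with `a = b = 7/2`. -/
noncomputable def Puser (μ : ℝ) (K : ℕ) (n : ℕ) : ℝ :=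
  (7/2 : ℝ) ^ ((K : ℝ) * (7/2)) * μ ^ n * Real.Gamma ((n : ℝ) + (K : ℝ) * (7/2)) /
    ((μ + 7/2) ^ ((K : ℝ) * (7/2) + (n : ℝ)) * Real.Gamma ((K : ℝ) * (7/2)) *
      (n.factorial : ℝ))

lemma Puser_pos {μ : ℝ} (hμ : 0 < μ) {K : ℕ} (hK : 0 < K) (n : ℕ) : 0 < Puser μ K n := by
  have hα : (0:ℝ) < (K : ℝ) * (7/2) := by
    have : (1:ℝ) ≤ (K:ℝ) := by exact_mod_cast hK
    nlinarith
  have hb : (0:ℝ) < μ + 7/2 := by linarith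
  apply div_pos
  · apply mul_pos (mul_pos (Real.rpow_pos_of_pos (by norm_num) _) (pow_pos hμ _))
    exact Real.Gamma_pos_of_pos (by positivity)
  · exact mul_pos (mul_pos (Real.rpow_pos_of_pos hb _) (Real.Gamma_pos_of_pos hα))
      (by exact_mod_cast n.factorial_pos)

lemma Puser_succ {μ : ℝ} (hμ : 0 < μ) {K : ℕ} (hK : 0 < K) (n : ℕ) :
    Puser μ K (n + 1) =
      (μ / (μ + 7/2)) * (((n : ℝ) + (K : ℝ) * (7/2)) / ((n : ℝ) + 1)) * Puser μ K n := by
  have hα : (0:ℝ) < (K : ℝ) * (7/2) := by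
    have : (1:ℝ) ≤ (K:ℝ) := by exact_mod_cast hK
    nlinarith
  have hb : (0:ℝ) < μ + 7/2 := by linarith
  have hG : Real.Gamma (((n:ℝ) + (K : ℝ) * (7/2)) + 1)
      = ((n:ℝ) + (K : ℝ) * (7/2)) * Real.Gamma ((n:ℝ) + (K : ℝ) * (7/2)) :=
    Real.Gamma_add_one (by positivity)
  have hR : (μ + 7/2) ^ ((K : ℝ) * (7/2) + ((n:ℝ) + 1))
      = (μ + 7/2) ^ ((K : ℝ) * (7/2) + (n:ℝ)) * (μ + 7/2) := by
    rw [show (K : ℝ) * (7/2) + ((n:ℝ) + 1) = ((K : ℝ) * (7/2) + (n:ℝ)) + 1 by ring,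
      Real.rpow_add_one (ne_of_gt hb)]
  unfold Puser
  rw [Nat.factorial_succ, pow_succ]
  push_cast
  rw [show (n:ℝ) + 1 + (K:ℝ) * (7/2) = ((n:ℝ) + (K:ℝ)*(7/2)) + 1 by ring, hG, hR]
  have h1 : Real.Gamma ((K : ℝ) * (7/2)) ≠ 0 := ne_of_gt (Real.Gamma_pos_of_pos hα)
  have h2 : (μ + 7/2) ^ ((K : ℝ) * (7/2) + (n:ℝ)) ≠ 0 :=
    ne_of_gt (Real.rpow_pos_of_pos hb _)
  have h3 : ((n.factorial : ℝ)) ≠ 0 := by exact_mod_cast n.factorial_ne_zero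
  have h4 : ((n:ℝ) + 1) ≠ 0 := by positivity
  field_simp

lemma Puser_key {μ : ℝ} (hμ : 0 < μ) {K : ℕ} (hK : 0 < K) (T : ℕ)
    (hT : (T : ℝ) > 2 / ((K : ℝ) * (7/2) - 2)) (k : ℕ) :
    (μ/(μ+7/2))^k * (Puser μ K (T+1) / ((T:ℝ)+1)) ≤
      Puser μ K (T+1+k) / ((T:ℝ)+1+(k:ℝ)) := by
  set q : ℝ := μ/(μ+7/2) with hqdef
  set α : ℝ := (K:ℝ)*(7/2) with hαdef
  have hb : (0:ℝ) < μ+7/2 := by linarith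
  have hq0 : 0 < q := div_pos hμ hb
  have hK1 : (1:ℝ) ≤ (K:ℝ) := by exact_mod_cast hK
  have hα2 : (3/2:ℝ) ≤ α - 2 := by rw [hαdef]; nlinarith
  have h2T : 2 < (α-2)*(T:ℝ) := by
    rw [gt_iff_lt, div_lt_iff₀ (by linarith)] at hT
    linarith
  induction k with
  | zero => simp
  | succ k ih =>
    set x : ℝ := (T:ℝ)+1+(k:ℝ) with hxdef
    have hx0 : 0 < x := by positivity
    have hP : 0 < Puser μ K (T+1+k) := Puser_pos hμ hK _
    have hc : 0 < Puser μ K (T+1) := Puser_pos hμ hK _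
    have hT1 : (0:ℝ) < (T:ℝ)+1 := by positivity
    have hpoly : (x+1)^2 ≤ (x+α)*x := by
      have hk0 : (0:ℝ) ≤ (k:ℝ) := k.cast_nonneg
      nlinarith [mul_nonneg (show (0:ℝ) ≤ α-2 by linarith) hk0]
    have hsucc : Puser μ K (T+1+(k+1)) = q * ((x+α)/(x+1)) * Puser μ K (T+1+k) := by
      have h := Puser_succ hμ hK (T+1+k)
      rw [show T+1+(k+1) = (T+1+k)+1 from by omega, h]
      push_cast
      rw [hxdef]
    rw [hsucc]
    have hIH' : q^k * (Puser μ K (T+1) / ((T:ℝ)+1)) * x ≤ Puser μ K (T+1+k) :=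
      (le_div_iff₀ hx0).mp ih
    have hcast : (T:ℝ)+1+((k+1 : ℕ):ℝ) = x+1 := by rw [hxdef]; push_cast; ring
    rw [hcast, le_div_iff₀ (by positivity : (0:ℝ) < x+1),
      show q * ((x+α)/(x+1)) * Puser μ K (T+1+k)
        = q*(x+α)* Puser μ K (T+1+k) / (x+1) from by ring,
      le_div_iff₀ (by positivity : (0:ℝ) < x+1)]
    have hxα : (0:ℝ) ≤ q*(x+α) := by nlinarith
    calc q^(k+1) * (Puser μ K (T+1)/((T:ℝ)+1)) * (x+1) * (x+1)
        = (q*(x+1)^2) * (q^k*(Puser μ K (T+1)/((T:ℝ)+1))) := by ring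
      _ ≤ (q*((x+α)*x)) * (q^k*(Puser μ K (T+1)/((T:ℝ)+1))) := by
          apply mul_le_mul_of_nonneg_right _ (by positivity)
          exact mul_le_mul_of_nonneg_left hpoly hq0.le
      _ = (q*(x+α)) * (q^k*(Puser μ K (T+1)/((T:ℝ)+1))*x) := by ring
      _ ≤ (q*(x+α)) * Puser μ K (T+1+k) := mul_le_mul_of_nonneg_left hIH' hxα

lemma Puser_summable {μ : ℝ} (hμ : 0 < μ) {K : ℕ} (hK : 0 < K) :
    Summable (Puser μ K) := by
  set q : ℝ := μ/(μ+7/2) with hqdef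
  set α : ℝ := (K:ℝ)*(7/2) with hαdef
  have hb : (0:ℝ) < μ+7/2 := by linarith
  have hq0 : 0 < q := div_pos hμ hb
  have hq1 : q < 1 := (div_lt_one hb).mpr (by linarith)
  apply summable_of_ratio_norm_eventually_le (r := (1+q)/2) (by linarith)
  obtain ⟨N, hN⟩ := exists_nat_ge (2*q*α/(1-q))
  filter_upwards [Filter.eventually_ge_atTop N] with n hn
  have hn' : (N:ℝ) ≤ (n:ℝ) := by exact_mod_cast hn
  have hP : 0 < Puser μ K n := Puser_pos hμ hK n
  have hP1 : 0 < Puser μ K (n+1) := Puser_pos hμ hK (n+1)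
  rw [Real.norm_eq_abs, Real.norm_eq_abs, abs_of_pos hP1, abs_of_pos hP,
    Puser_succ hμ hK n]
  have h1 : 2*q*α ≤ (1-q)*(N:ℝ) := by
    rw [div_le_iff₀ (by linarith : (0:ℝ) < 1-q)] at hN
    linarith
  have h2 : (1-q)*(N:ℝ) ≤ (1-q)*(n:ℝ) := by nlinarith
  have hkey : q * (((n:ℝ)+α)/((n:ℝ)+1)) ≤ (1+q)/2 := by
    rw [show q * (((n:ℝ)+α)/((n:ℝ)+1)) = q * ((n:ℝ)+α)/((n:ℝ)+1) from by ring,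
      div_le_iff₀ (by positivity : (0:ℝ) < (n:ℝ)+1)]
    have hK1 : (1:ℝ) ≤ (K:ℝ) := by exact_mod_cast hK
    have hα0 : 0 < α := by rw [hαdef]; nlinarith
    nlinarith
  calc q * (((n:ℝ)+α)/((n:ℝ)+1)) * Puser μ K n
      ≤ (1+q)/2 * Puser μ K n := mul_le_mul_of_nonneg_right hkey hP.le
    _ = (1+q)/2 * Puser μ K n := rfl

lemma aux_strict (P qv av t : ℝ) (hP : 0 < P) (hq : 0 < qv)
    (hpoly : (t+2)^2 < (t+1+av)*(t+1)) (ht : 0 < t+1) :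
    (1+1)*qv^(1:ℕ)*(P/(t+1)) < (1+1)/(t+1+1) * (qv*((t+1+av)/(t+2)) * P) := by
  have h2 : (0:ℝ) < t+2 := by linarith
  have e1 : (1+1)*qv^(1:ℕ)*(P/(t+1)) = 2*qv*P/(t+1) := by
    rw [pow_one]; ring
  have e2 : (1+1)/(t+1+1) * (qv*((t+1+av)/(t+2)) * P) = 2*qv*(t+1+av)*P/((t+2)*(t+2)) := by
    rw [show t+1+1 = t+2 from by ring]
    field_simp
    ring
  rw [e1, e2, div_lt_div_iff₀ ht (by positivity)]
  nlinarith [mul_pos (mul_pos hq hP)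
    (show (0:ℝ) < (t+1+av)*(t+1)-(t+2)^2 by linarith)]

/-- The `n`-th summand of the user blocking probability: `((n − T)/n)·P_K(n)` for
`n ≥ T + 1`, and `0` otherwise. -/
noncomputable def blockTerm (μ : ℝ) (K T : ℕ) (n : ℕ) : ℝ :=
  if T + 1 ≤ n then (((n : ℝ) - (T : ℝ)) / (n : ℝ)) * Puser μ K n else 0

/-- The user blocking probability `P_b(K,T) = Σ_{n=T+1}^∞ ((n − T)/n)·P_K(n)`. -/
noncomputable def Pblock (μ : ℝ) (K T : ℕ) : ℝ := ∑' n : ℕ, blockTerm μ K T n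

/-- strict lower bound on the user blocking probability:
`P_b(K,T) > P_K(T+1) / ((T+1)(1−λ)²)` with `λ = μ/(μ+b)`. -/
theorem Pblock_lower_bound (μ : ℝ) (hμ : 0 < μ) (K : ℕ) (hK : 0 < K) (T : ℕ)
    (hT : (T : ℝ) > 2 / ((K : ℝ) * (7/2) - 2)) :
    Pblock μ K T >
      Puser μ K (T + 1) / (((T : ℝ) + 1) * (1 - μ / (μ + 7/2)) ^ 2) := by
  have hb : (0:ℝ) < μ + 7/2 := by linarith
  set q : ℝ := μ / (μ + 7/2) with hqdef
  set α : ℝ := (K:ℝ)*(7/2) with hαdef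
  have hq0 : 0 < q := div_pos hμ hb
  have hq1 : q < 1 := (div_lt_one hb).mpr (by linarith)
  have hK1 : (1:ℝ) ≤ (K:ℝ) := by exact_mod_cast hK
  have hα2 : (3/2:ℝ) ≤ α - 2 := by rw [hαdef]; nlinarith
  have h2T : 2 < (α-2)*(T:ℝ) := by
    rw [gt_iff_lt, div_lt_iff₀ (by linarith)] at hT
    linarith
  have hc : 0 < Puser μ K (T+1) := Puser_pos hμ hK _
  have hT1 : (0:ℝ) < (T:ℝ)+1 := by positivity
  -- summability
  have hbt_nonneg : ∀ n, 0 ≤ blockTerm μ K T n := by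
    intro n
    rw [blockTerm]
    split
    · rename_i h
      have hn : (T:ℝ) + 1 ≤ (n:ℝ) := by exact_mod_cast h
      have hn0 : (0:ℝ) < n := by linarith
      exact mul_nonneg (div_nonneg (by linarith) (by linarith)) (Puser_pos hμ hK n).le
    · exact le_refl 0
  have hbt_le : ∀ n, blockTerm μ K T n ≤ Puser μ K n := by
    intro n
    rw [blockTerm]
    split
    · rename_i h
      have hn : (T:ℝ) + 1 ≤ (n:ℝ) := by exact_mod_cast h
      have hn0 : (0:ℝ) < n := by linarith
      have hle : ((n:ℝ) - (T:ℝ)) / (n:ℝ) ≤ 1 := by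
        rw [div_le_one hn0]
        have : (0:ℝ) ≤ (T:ℝ) := T.cast_nonneg
        linarith
      calc ((n:ℝ) - (T:ℝ)) / (n:ℝ) * Puser μ K n ≤ 1 * Puser μ K n :=
            mul_le_mul_of_nonneg_right hle (Puser_pos hμ hK n).le
        _ = Puser μ K n := one_mul _
    · exact (Puser_pos hμ hK n).le
  have hsum : Summable (blockTerm μ K T) :=
    (Puser_summable hμ hK).of_nonneg_of_le hbt_nonneg hbt_le
  have hshift : Summable (fun k => blockTerm μ K T (k + (T+1))) :=
    (summable_nat_add_iff (T+1)).mpr hsum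
  have hPb : Pblock μ K T = ∑' k, blockTerm μ K T (k + (T+1)) := by
    rw [Pblock, ← Summable.sum_add_tsum_nat_add (T+1) hsum, Finset.sum_eq_zero, zero_add]
    intro i hi
    rw [blockTerm, if_neg (Nat.not_le.mpr (Finset.mem_range.mp hi))]
  -- value of shifted terms
  have hf : ∀ k : ℕ, blockTerm μ K T (k + (T+1))
      = (((k:ℝ)+1)/((T:ℝ)+1+(k:ℝ))) * Puser μ K (T+1+k) := by
    intro k
    rw [blockTerm, if_pos (Nat.le_add_left _ _), show k + (T+1) = T+1+k from by omega]
    push_cast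
    ring
  -- geometric series facts
  have hqn : ‖q‖ < 1 := by rw [Real.norm_eq_abs, abs_of_pos hq0]; exact hq1
  have sm1 : Summable (fun k : ℕ => (k:ℝ)*q^k) :=
    (hasSum_coe_mul_geometric_of_norm_lt_one hqn).summable
  have sm2 : Summable (fun k : ℕ => q^k) := summable_geometric_of_lt_one hq0.le hq1
  have sm3 : Summable (fun k : ℕ => ((k:ℝ)+1)*q^k) :=
    (sm1.add sm2).congr (fun k => by ring)
  have h1q : (1:ℝ) - q ≠ 0 := by linarith
  have s3 : ∑' k : ℕ, ((k:ℝ)+1)*q^k = 1/(1-q)^2 := by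
    have he : ∀ k : ℕ, ((k:ℝ)+1)*q^k = (k:ℝ)*q^k + q^k := fun k => by ring
    rw [tsum_congr he, Summable.tsum_add sm1 sm2,
      tsum_coe_mul_geometric_of_norm_lt_one hqn,
      tsum_geometric_of_lt_one hq0.le hq1]
    field_simp
    ring
  set C : ℝ := Puser μ K (T+1) / ((T:ℝ)+1) with hCdef
  have hC0 : 0 < C := div_pos hc hT1
  have smg : Summable (fun k : ℕ => ((k:ℝ)+1)*q^k*C) := sm3.mul_right C
  have hgsum : ∑' k : ℕ, ((k:ℝ)+1)*q^k*C = C/(1-q)^2 := by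
    rw [tsum_mul_right, s3]
    ring
  -- pointwise bounds
  have hg_le : ∀ k : ℕ, ((k:ℝ)+1)*q^k*C ≤ blockTerm μ K T (k + (T+1)) := by
    intro k
    rw [hf k]
    have h := mul_le_mul_of_nonneg_left (Puser_key hμ hK T hT k)
      (show (0:ℝ) ≤ (k:ℝ)+1 by positivity)
    calc ((k:ℝ)+1)*q^k*C = ((k:ℝ)+1) * (q^k*(Puser μ K (T+1)/((T:ℝ)+1))) := by
          rw [hCdef]; ring
      _ ≤ ((k:ℝ)+1) * (Puser μ K (T+1+k) / ((T:ℝ)+1+(k:ℝ))) := h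
      _ = (((k:ℝ)+1)/((T:ℝ)+1+(k:ℝ))) * Puser μ K (T+1+k) := by ring
  have hP2 : Puser μ K (T+1+1)
      = q * (((T:ℝ)+1+α)/((T:ℝ)+2)) * Puser μ K (T+1) := by
    rw [Puser_succ hμ hK (T+1), hαdef, hqdef]
    push_cast
    ring
  have hpoly : ((T:ℝ)+2)^2 < ((T:ℝ)+1+α)*((T:ℝ)+1) := by nlinarith
  have hg_strict : (((1:ℕ):ℝ)+1)*q^(1:ℕ)*C < blockTerm μ K T (1 + (T+1)) := by
    rw [hf 1, hP2, hCdef]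
    push_cast
    exact aux_strict (Puser μ K (T+1)) q α (T:ℝ) hc hq0 hpoly hT1
  have hg_nonneg : ∀ k : ℕ, 0 ≤ ((k:ℝ)+1)*q^k*C := fun k =>
    mul_nonneg (mul_nonneg (by positivity) (pow_nonneg hq0.le k)) hC0.le
  have hlt := Summable.tsum_lt_tsum_of_nonneg (i := 1) hg_nonneg hg_le hg_strict hshift
  rw [hPb, show Puser μ K (T+1)/(((T:ℝ)+1)*(1-q)^2) = C/(1-q)^2 from by
    rw [hCdef, div_div], ← hgsum]
  exact hlt
end

section
/- (Weak law of large numbers for the cluster user count) Fix μ > 0 and a = b = 7/2. For every ε > 0, the tail probability of the user-number distribution concentrates: lim_{K→∞} Σ_{n ∈ ℕ, |n − K·μ| > K·ε} P_K(n) = 0, where the limit is over positive integers K tending to infinity. -/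
open scoped BigOperators

section NBaux

open MeasureTheory ProbabilityTheory Real Set Filter

noncomputable def NB (μ r : ℝ) (n : ℕ) : ℝ :=
  (7/2 : ℝ) ^ r * μ ^ n * Real.Gamma ((n : ℝ) + r) /
    ((μ + 7/2) ^ (r + (n : ℝ)) * Real.Gamma r * (n.factorial : ℝ))

lemma NB_pos {μ r : ℝ} (hμ : 0 < μ) (hr : 0 < r) (n : ℕ) : 0 < NB μ r n := by
  have h1 : (0:ℝ) < (n:ℝ) + r := by positivity
  unfold NB
  positivity

lemma lint_gammaPDF_Ioi {s c : ℝ} (hs : 0 < s) (hc : 0 < c) :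
    ∫⁻ x in Ioi (0:ℝ), gammaPDF s c x = 1 := by
  have h := lintegral_gammaPDF_eq_one hs hc
  rw [← lintegral_add_compl (gammaPDF s c) measurableSet_Ioi, compl_Ioi] at h
  have h0 : ∫⁻ x in Iic (0:ℝ), gammaPDF s c x = 0 := by
    rw [setLIntegral_congr (Iio_ae_eq_Iic (a := (0:ℝ))).symm]
    exact lintegral_gammaPDF_of_nonpos le_rfl
  rwa [h0, add_zero] at h

lemma lint_rpow_exp {s c : ℝ} (hs : 0 < s) (hc : 0 < c) :
    ∫⁻ x in Ioi (0:ℝ), ENNReal.ofReal (x ^ (s-1) * Real.exp (-(c * x))) =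
      ENNReal.ofReal (Real.Gamma s / c ^ s) := by
  have hG : 0 < Real.Gamma s := Real.Gamma_pos_of_pos hs
  have hcs : (0:ℝ) < c ^ s := Real.rpow_pos_of_pos hc s
  calc ∫⁻ x in Ioi (0:ℝ), ENNReal.ofReal (x ^ (s-1) * Real.exp (-(c * x)))
      = ∫⁻ x in Ioi (0:ℝ), ENNReal.ofReal (Real.Gamma s / c ^ s) * gammaPDF s c x := by
        apply setLIntegral_congr_fun measurableSet_Ioi
        intro x hx; beta_reduce
        rw [gammaPDF_of_nonneg (le_of_lt hx), ← ENNReal.ofReal_mul (by positivity)]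
        congr 1
        field_simp
    _ = ENNReal.ofReal (Real.Gamma s / c ^ s) * 1 := by
        rw [lintegral_const_mul' _ _ ENNReal.ofReal_ne_top, lint_gammaPDF_Ioi hs hc]
    _ = _ := mul_one _

lemma poisson_tsum {x : ℝ} (hx : 0 ≤ x) :
    ∑' n : ℕ, ENNReal.ofReal (Real.exp (-x) * x ^ n / n.factorial) = 1 := by
  have hsum : Summable (fun n : ℕ => Real.exp (-x) * x ^ n / n.factorial) := by
    refine Summable.congr ((Real.summable_pow_div_factorial x).mul_left (Real.exp (-x))) ?_
    intro n; ring
  have hnn : ∀ n : ℕ, 0 ≤ Real.exp (-x) * x ^ n / n.factorial := by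
    intro n; positivity
  rw [← ENNReal.ofReal_tsum_of_nonneg hnn hsum]
  have ht : ∑' n : ℕ, Real.exp (-x) * x ^ n / n.factorial = 1 := by
    have h1 : ∑' n : ℕ, Real.exp (-x) * x ^ n / n.factorial
        = Real.exp (-x) * ∑' n : ℕ, x ^ n / n.factorial := by
      rw [← tsum_mul_left]; exact tsum_congr fun n => by ring
    have h2 : ∑' n : ℕ, x ^ n / (n.factorial : ℝ) = Real.exp x := by
      rw [Real.exp_eq_exp_ℝ, NormedSpace.exp_eq_tsum_div]
    rw [h1, h2, ← Real.exp_add]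
    simp
  rw [ht, ENNReal.ofReal_one]

lemma NB_mix {μ r : ℝ} (hμ : 0 < μ) (hr : 0 < r) (n : ℕ) :
    ENNReal.ofReal (NB μ r n) =
      ∫⁻ x in Ioi (0:ℝ),
        ENNReal.ofReal (Real.exp (-x) * x ^ n / n.factorial) * gammaPDF r (7/2/μ) x := by
  set β : ℝ := 7/2/μ with hβdef
  have hβ : 0 < β := by positivity
  have hnr : (0:ℝ) < (n:ℝ) + r := by positivity
  have h1β : 0 < 1 + β := by positivity
  have hG : 0 < Real.Gamma r := Real.Gamma_pos_of_pos hr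
  have hfac : (0:ℝ) < (n.factorial : ℝ) := by exact_mod_cast n.factorial_pos
  set C : ℝ := β ^ r / (Real.Gamma r * n.factorial) with hCdef
  have hC : 0 < C := by positivity
  have step1 : ∫⁻ x in Ioi (0:ℝ),
      ENNReal.ofReal (Real.exp (-x) * x ^ n / n.factorial) * gammaPDF r β x
      = ∫⁻ x in Ioi (0:ℝ),
        ENNReal.ofReal C * ENNReal.ofReal (x ^ ((n:ℝ) + r - 1) * Real.exp (-((1+β) * x))) := by
    apply setLIntegral_congr_fun measurableSet_Ioi
    intro x hx; beta_reduce
    have hx : (0:ℝ) < x := hx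
    rw [gammaPDF_of_nonneg hx.le, ← ENNReal.ofReal_mul (by positivity),
        ← ENNReal.ofReal_mul hC.le]
    congr 1
    have hxn : (x:ℝ) ^ (n:ℕ) = x ^ ((n:ℝ)) := (Real.rpow_natCast x n).symm
    have hsplit : x ^ ((n:ℝ) + r - 1) = x ^ ((n:ℝ)) * x ^ (r-1) := by
      rw [← Real.rpow_add hx]; ring_nf
    have hexp : Real.exp (-((1+β) * x)) = Real.exp (-x) * Real.exp (-(β * x)) := by
      rw [← Real.exp_add]; ring_nf
    rw [hsplit, hexp, hxn, hCdef]
    field_simp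
  have step2 : ∫⁻ x in Ioi (0:ℝ),
      ENNReal.ofReal C * ENNReal.ofReal (x ^ ((n:ℝ) + r - 1) * Real.exp (-((1+β) * x)))
      = ENNReal.ofReal C * ENNReal.ofReal (Real.Gamma ((n:ℝ)+r) / (1+β) ^ ((n:ℝ)+r)) := by
    rw [lintegral_const_mul' _ _ ENNReal.ofReal_ne_top, lint_rpow_exp hnr h1β]
  rw [step1, step2, ← ENNReal.ofReal_mul hC.le]
  congr 1
  have h1b : (1:ℝ) + β = (μ + 7/2) / μ := by rw [hβdef, eq_div_iff hμ.ne']; field_simp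
  have hb1 : ((1:ℝ)+β) ^ ((n:ℝ)+r) = (μ + 7/2) ^ ((n:ℝ)+r) / μ ^ ((n:ℝ)+r) := by
    rw [h1b, Real.div_rpow (by linarith) hμ.le]
  have hβr : β ^ r = (7/2:ℝ) ^ r / μ ^ r := by
    rw [hβdef, Real.div_rpow (by norm_num) hμ.le]
  have hμnr : μ ^ ((n:ℝ)+r) = μ ^ n * μ ^ r := by
    rw [Real.rpow_add hμ, Real.rpow_natCast]
  have hcomm : (μ + 7/2) ^ (r + (n:ℝ)) = (μ + 7/2) ^ ((n:ℝ) + r) := by rw [add_comm r ((n:ℝ))]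
  have hpow1 : (0:ℝ) < (μ + 7/2) ^ ((n:ℝ)+r) := Real.rpow_pos_of_pos (by linarith) _
  have hpow2 : (0:ℝ) < μ ^ r := Real.rpow_pos_of_pos hμ _
  have hpow3 : (0:ℝ) < μ ^ n := by positivity
  rw [NB, hCdef, hβr, hb1, hμnr, hcomm]
  field_simp

lemma tsum_ofReal_NB {μ r : ℝ} (hμ : 0 < μ) (hr : 0 < r) :
    ∑' n : ℕ, ENNReal.ofReal (NB μ r n) = 1 := by
  have hβ : (0:ℝ) < 7/2/μ := by positivity
  have hmeas : ∀ n : ℕ, AEMeasurable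
      (fun x : ℝ => ENNReal.ofReal (Real.exp (-x) * x ^ n / n.factorial) * gammaPDF r (7/2/μ) x)
      (volume.restrict (Ioi (0:ℝ))) := by
    intro n
    apply Measurable.aemeasurable
    apply Measurable.fun_mul
    · exact (((Real.measurable_exp.comp measurable_neg).mul (measurable_id.pow_const n)).div_const
        _).ennreal_ofReal
    · exact (measurable_gammaPDFReal r (7/2/μ)).ennreal_ofReal
  calc ∑' n : ℕ, ENNReal.ofReal (NB μ r n)
      = ∑' n : ℕ, ∫⁻ x in Ioi (0:ℝ),
          ENNReal.ofReal (Real.exp (-x) * x ^ n / n.factorial) * gammaPDF r (7/2/μ) x :=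
        tsum_congr fun n => NB_mix hμ hr n
    _ = ∫⁻ x in Ioi (0:ℝ), ∑' n : ℕ,
          ENNReal.ofReal (Real.exp (-x) * x ^ n / n.factorial) * gammaPDF r (7/2/μ) x :=
        (lintegral_tsum hmeas).symm
    _ = ∫⁻ x in Ioi (0:ℝ), gammaPDF r (7/2/μ) x := by
        apply setLIntegral_congr_fun measurableSet_Ioi
        intro x hx; beta_reduce
        rw [ENNReal.tsum_mul_right, poisson_tsum (le_of_lt hx), one_mul]
    _ = 1 := lint_gammaPDF_Ioi hr hβ

lemma summable_NB {μ r : ℝ} (hμ : 0 < μ) (hr : 0 < r) : Summable (NB μ r) := by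
  have h := tsum_ofReal_NB hμ hr
  have hne : ∑' n : ℕ, ENNReal.ofReal (NB μ r n) ≠ ⊤ := by rw [h]; exact ENNReal.one_ne_top
  have := ENNReal.summable_toReal hne
  refine this.congr fun n => ?_
  exact ENNReal.toReal_ofReal (NB_pos hμ hr n).le

lemma tsum_NB {μ r : ℝ} (hμ : 0 < μ) (hr : 0 < r) : ∑' n : ℕ, NB μ r n = 1 := by
  have h := ENNReal.ofReal_tsum_of_nonneg (fun n => (NB_pos hμ hr n).le) (summable_NB hμ hr)
  rw [tsum_ofReal_NB hμ hr] at h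
  have h0 : (0:ℝ) ≤ ∑' n : ℕ, NB μ r n := tsum_nonneg fun n => (NB_pos hμ hr n).le
  have := congrArg ENNReal.toReal h
  rwa [ENNReal.toReal_ofReal h0, ENNReal.toReal_one] at this

lemma NB_succ {μ r : ℝ} (hμ : 0 < μ) (hr : 0 < r) (n : ℕ) :
    NB μ r (n+1) = (μ / (μ + 7/2)) * (((n:ℝ) + r) / ((n:ℝ) + 1)) * NB μ r n := by
  have hb : (0:ℝ) < μ + 7/2 := by linarith
  have hg : Real.Gamma (((n:ℕ)+1:ℕ) + r) = ((n:ℝ) + r) * Real.Gamma ((n:ℝ) + r) := by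
    push_cast
    rw [show (n:ℝ) + 1 + r = ((n:ℝ) + r) + 1 by ring, Real.Gamma_add_one (by positivity)]
  have hp : (μ + 7/2) ^ (r + (((n:ℕ)+1:ℕ):ℝ)) = (μ + 7/2) ^ (r + (n:ℝ)) * (μ + 7/2) := by
    push_cast
    rw [show r + ((n:ℝ) + 1) = (r + (n:ℝ)) + 1 by ring, Real.rpow_add_one hb.ne']
  have hfac : (((n+1).factorial : ℕ) : ℝ) = ((n:ℝ) + 1) * (n.factorial : ℝ) := by
    rw [Nat.factorial_succ]; push_cast; ring
  have hG : (0:ℝ) < Real.Gamma r := Real.Gamma_pos_of_pos hr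
  have hfp : (0:ℝ) < (n.factorial : ℝ) := by exact_mod_cast n.factorial_pos
  have hpow : (0:ℝ) < (μ + 7/2) ^ (r + (n:ℝ)) := Real.rpow_pos_of_pos hb _
  have hn1 : (0:ℝ) < (n:ℝ) + 1 := by positivity
  rw [NB, NB, hg, hp, hfac, pow_succ]
  field_simp

lemma ratio_tendsto {μ r : ℝ} (hμ : 0 < μ) (hr : 0 < r) (k : ℕ) :
    Tendsto (fun n : ℕ =>
        ‖((n:ℝ)+1) ^ k * NB μ r (n+1)‖ / ‖(n:ℝ) ^ k * NB μ r n‖)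
      atTop (nhds (μ / (μ + 7/2))) := by
  have hb : (0:ℝ) < μ + 7/2 := by linarith
  have hg : Tendsto (fun n : ℕ =>
      (1 + 1/(n:ℝ)) ^ k * ((μ / (μ + 7/2)) * (1 + (r-1)/((n:ℝ)+1)))) atTop
      (nhds (μ / (μ + 7/2))) := by
    have h1 : Tendsto (fun n : ℕ => (1:ℝ) + 1/(n:ℝ)) atTop (nhds 1) := by
      have := tendsto_one_div_atTop_nhds_zero_nat (𝕜 := ℝ)
      simpa using tendsto_const_nhds.add this
    have h2 : Tendsto (fun n : ℕ => (r-1)/((n:ℝ)+1)) atTop (nhds 0) := by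
      apply Tendsto.div_atTop tendsto_const_nhds
      exact tendsto_atTop_add_const_right _ 1 tendsto_natCast_atTop_atTop
    have h3 : Tendsto (fun n : ℕ => ((1:ℝ) + 1/(n:ℝ)) ^ k) atTop (nhds 1) := by
      simpa using h1.pow k
    have h4 : Tendsto (fun n : ℕ => (μ / (μ + 7/2)) * (1 + (r-1)/((n:ℝ)+1))) atTop
        (nhds (μ / (μ + 7/2))) := by
      simpa using ((tendsto_const_nhds (x := (1:ℝ))).add h2).const_mul (μ / (μ + 7/2))
    simpa using h3.mul h4
  refine hg.congr' ?_
  filter_upwards [eventually_ge_atTop 1] with n hn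
  have hn0 : (0:ℝ) < (n:ℝ) := by exact_mod_cast hn
  have hn1 : (0:ℝ) < (n:ℝ) + 1 := by positivity
  have hN := NB_pos hμ hr n
  have hN1 := NB_pos hμ hr (n+1)
  have hnum : (0:ℝ) < ((n:ℝ)+1) ^ k * NB μ r (n+1) := by positivity
  have hden : (0:ℝ) < (n:ℝ) ^ k * NB μ r n := by positivity
  rw [Real.norm_of_nonneg hnum.le, Real.norm_of_nonneg hden.le, NB_succ hμ hr n]
  have e1 : (1:ℝ) + 1/(n:ℝ) = ((n:ℝ)+1)/(n:ℝ) := by field_simp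
  have e2 : (1:ℝ) + (r-1)/((n:ℝ)+1) = ((n:ℝ)+r)/((n:ℝ)+1) := by field_simp; ring
  rw [e1, e2, div_pow]
  field_simp

lemma summable_pow_mul_NB {μ r : ℝ} (hμ : 0 < μ) (hr : 0 < r) (k : ℕ) :
    Summable (fun n : ℕ => (n:ℝ) ^ k * NB μ r n) := by
  have hb : (0:ℝ) < μ + 7/2 := by linarith
  refine summable_of_ratio_test_tendsto_lt_one (l := μ / (μ + 7/2)) ?_ ?_ ?_
  · rw [div_lt_one hb]; linarith
  · filter_upwards [eventually_ge_atTop 1] with n hn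
    have hn0 : (0:ℝ) < (n:ℝ) := by exact_mod_cast hn
    have := NB_pos hμ hr n
    positivity
  · exact_mod_cast ratio_tendsto hμ hr k

lemma succ_mul_NB {μ r : ℝ} (hμ : 0 < μ) (hr : 0 < r) (n : ℕ) :
    ((n:ℝ) + 1) * NB μ r (n+1) = (μ / (μ + 7/2)) * (((n:ℝ) + r) * NB μ r n) := by
  have hn1 : ((n:ℝ) + 1) ≠ 0 := by positivity
  rw [NB_succ hμ hr n]
  field_simp

lemma summable_id_mul_NB {μ r : ℝ} (hμ : 0 < μ) (hr : 0 < r) :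
    Summable (fun n : ℕ => (n:ℝ) * NB μ r n) :=
  (summable_pow_mul_NB hμ hr 1).congr fun n => by rw [pow_one]

lemma moment1 {μ r : ℝ} (hμ : 0 < μ) (hr : 0 < r) :
    ∑' n : ℕ, (n:ℝ) * NB μ r n = μ * r / (7/2) := by
  have hb : (0:ℝ) < μ + 7/2 := by linarith
  set p : ℝ := μ / (μ + 7/2) with hp
  have hq : (0:ℝ) < 1 - p := by rw [hp]; rw [sub_pos, div_lt_one hb]; linarith
  set S : ℝ := ∑' n : ℕ, (n:ℝ) * NB μ r n with hS
  have hs1 : Summable (fun n : ℕ => (n:ℝ) * NB μ r n) := summable_id_mul_NB hμ hr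
  have key : S = p * S + p * r := by
    conv_lhs => rw [hS, Summable.tsum_eq_zero_add hs1]
    have h1 : ∀ n : ℕ, (((n:ℕ)+1:ℕ):ℝ) * NB μ r (n+1)
        = p * ((n:ℝ) * NB μ r n) + (p * r) * NB μ r n := by
      intro n
      push_cast
      rw [succ_mul_NB hμ hr n]
      ring
    rw [tsum_congr h1, Summable.tsum_add (hs1.mul_left p) ((summable_NB hμ hr).mul_left (p*r)),
        tsum_mul_left, tsum_mul_left, tsum_NB hμ hr, mul_one]
    simp [hS]
  have h2 : S * (1 - p) = p * r := by linear_combination key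
  have h3 : S = p * r / (1 - p) := by
    rw [eq_div_iff hq.ne']; exact h2
  rw [h3, hp]
  field_simp
  ring

lemma moment2 {μ r : ℝ} (hμ : 0 < μ) (hr : 0 < r) :
    ∑' n : ℕ, (n:ℝ)^2 * NB μ r n
      = (μ * r / (7/2))^2 + (μ * r / (7/2)) * ((μ + 7/2) / (7/2)) := by
  have hb : (0:ℝ) < μ + 7/2 := by linarith
  set p : ℝ := μ / (μ + 7/2) with hp
  have hq : (0:ℝ) < 1 - p := by rw [hp]; rw [sub_pos, div_lt_one hb]; linarith
  set S : ℝ := ∑' n : ℕ, (n:ℝ)^2 * NB μ r n with hS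
  have hs2 : Summable (fun n : ℕ => (n:ℝ)^2 * NB μ r n) := summable_pow_mul_NB hμ hr 2
  have hs1 : Summable (fun n : ℕ => (n:ℝ) * NB μ r n) := summable_id_mul_NB hμ hr
  have key : S = p * S + (p * (r+1)) * (μ * r / (7/2)) + p * r := by
    conv_lhs => rw [hS, Summable.tsum_eq_zero_add hs2]
    have h1 : ∀ n : ℕ, (((n:ℕ)+1:ℕ):ℝ)^2 * NB μ r (n+1)
        = p * ((n:ℝ)^2 * NB μ r n) + (p * (r+1)) * ((n:ℝ) * NB μ r n)
          + (p * r) * NB μ r n := by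
      intro n
      push_cast
      have h2 : ((n:ℝ)+1)^2 * NB μ r (n+1) = ((n:ℝ)+1) * (((n:ℝ)+1) * NB μ r (n+1)) := by ring
      rw [h2, succ_mul_NB hμ hr n]
      ring
    rw [tsum_congr h1,
        Summable.tsum_add ((hs2.mul_left p).add (hs1.mul_left (p*(r+1))))
          ((summable_NB hμ hr).mul_left (p*r)),
        Summable.tsum_add (hs2.mul_left p) (hs1.mul_left (p*(r+1))),
        tsum_mul_left, tsum_mul_left, tsum_mul_left, tsum_NB hμ hr, mul_one,
        moment1 hμ hr]
    simp [hS]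
  have h2 : S * (1 - p) = (p * (r+1)) * (μ * r / (7/2)) + p * r := by linear_combination key
  have h3 : S = ((p * (r+1)) * (μ * r / (7/2)) + p * r) / (1 - p) := by
    rw [eq_div_iff hq.ne']; exact h2
  rw [h3, hp]
  field_simp
  ring

lemma Puser_eq_NB (μ : ℝ) (K n : ℕ) : Puser μ K n = NB μ ((K : ℝ) * (7/2)) n := rfl

lemma summable_var_NB {μ r m : ℝ} (hμ : 0 < μ) (hr : 0 < r) :
    Summable (fun n : ℕ => ((n:ℝ) - m)^2 * NB μ r n) := by
  have h : ∀ n : ℕ, ((n:ℝ) - m)^2 * NB μ r n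
      = (n:ℝ)^2 * NB μ r n - (2*m) * ((n:ℝ) * NB μ r n) + m^2 * NB μ r n := by
    intro n; ring
  exact Summable.congr
    (((summable_pow_mul_NB hμ hr 2).sub ((summable_id_mul_NB hμ hr).mul_left (2*m))).add
      ((summable_NB hμ hr).mul_left (m^2))) (fun n => (h n).symm)

lemma var_NB {μ r : ℝ} (hμ : 0 < μ) (hr : 0 < r) :
    ∑' n : ℕ, ((n:ℝ) - μ * r / (7/2))^2 * NB μ r n
      = (μ * r / (7/2)) * ((μ + 7/2) / (7/2)) := by
  set m : ℝ := μ * r / (7/2) with hm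
  have h : ∀ n : ℕ, ((n:ℝ) - m)^2 * NB μ r n
      = (n:ℝ)^2 * NB μ r n - (2*m) * ((n:ℝ) * NB μ r n) + m^2 * NB μ r n := by
    intro n; ring
  rw [tsum_congr h,
      Summable.tsum_add (((summable_pow_mul_NB hμ hr 2)).sub ((summable_id_mul_NB hμ hr).mul_left (2*m)))
        ((summable_NB hμ hr).mul_left (m^2)),
      Summable.tsum_sub (summable_pow_mul_NB hμ hr 2) ((summable_id_mul_NB hμ hr).mul_left (2*m)),
      tsum_mul_left, tsum_mul_left, tsum_NB hμ hr, moment1 hμ hr, moment2 hμ hr, mul_one]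
  ring

lemma tail_le {μ ε : ℝ} (hμ : 0 < μ) (hε : 0 < ε) (K : ℕ) (hK : 1 ≤ K) :
    ∑' n : ℕ, (if |(n : ℝ) - (K : ℝ) * μ| > (K : ℝ) * ε then Puser μ K n else 0)
      ≤ (2 * μ * (μ + 7/2) / (7 * ε^2)) * (1 / (K:ℝ)) := by
  have hK0 : (0:ℝ) < (K:ℝ) := by exact_mod_cast hK
  set r : ℝ := (K:ℝ) * (7/2) with hrdef
  have hr : 0 < r := by positivity
  have hm : μ * r / (7/2) = (K:ℝ) * μ := by rw [hrdef]; field_simp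
  have hKε : (0:ℝ) < (K:ℝ) * ε := by positivity
  have hbound : ∀ n : ℕ,
      (if |(n : ℝ) - (K : ℝ) * μ| > (K : ℝ) * ε then Puser μ K n else 0)
        ≤ (((n:ℝ) - (K:ℝ)*μ)/((K:ℝ)*ε))^2 * NB μ r n := by
    intro n
    have hN := NB_pos hμ hr n
    by_cases hcase : |(n : ℝ) - (K : ℝ) * μ| > (K : ℝ) * ε
    · rw [if_pos hcase, Puser_eq_NB, ← hrdef]
      have h1 : (1:ℝ) < |((n:ℝ) - (K:ℝ)*μ)/((K:ℝ)*ε)| := by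
        rw [abs_div, abs_of_pos hKε, lt_div_iff₀ hKε, one_mul]
        exact hcase
      have h2 : (1:ℝ) ≤ (((n:ℝ) - (K:ℝ)*μ)/((K:ℝ)*ε))^2 := by
        have := sq_abs (((n:ℝ) - (K:ℝ)*μ)/((K:ℝ)*ε))
        nlinarith
      exact le_mul_of_one_le_left hN.le h2
    · rw [if_neg hcase]
      positivity
  have hsum_rhs : Summable (fun n : ℕ => (((n:ℝ) - (K:ℝ)*μ)/((K:ℝ)*ε))^2 * NB μ r n) := by
    have h : ∀ n : ℕ, (((n:ℝ) - (K:ℝ)*μ)/((K:ℝ)*ε))^2 * NB μ r n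
        = (1/((K:ℝ)*ε)^2) * (((n:ℝ) - (K:ℝ)*μ)^2 * NB μ r n) := by
      intro n; field_simp
    exact Summable.congr ((summable_var_NB hμ hr).mul_left (1/((K:ℝ)*ε)^2))
      (fun n => (h n).symm)
  have hsum_lhs : Summable (fun n : ℕ =>
      (if |(n : ℝ) - (K : ℝ) * μ| > (K : ℝ) * ε then Puser μ K n else 0)) := by
    apply Summable.of_nonneg_of_le _ _ (summable_NB hμ hr)
    · intro n
      by_cases hcase : |(n : ℝ) - (K : ℝ) * μ| > (K : ℝ) * ε
      · rw [if_pos hcase, Puser_eq_NB, ← hrdef]; exact (NB_pos hμ hr n).le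
      · rw [if_neg hcase]
    · intro n
      by_cases hcase : |(n : ℝ) - (K : ℝ) * μ| > (K : ℝ) * ε
      · rw [if_pos hcase, Puser_eq_NB, ← hrdef]
      · rw [if_neg hcase]; exact (NB_pos hμ hr n).le
  calc ∑' n : ℕ, (if |(n : ℝ) - (K : ℝ) * μ| > (K : ℝ) * ε then Puser μ K n else 0)
      ≤ ∑' n : ℕ, (((n:ℝ) - (K:ℝ)*μ)/((K:ℝ)*ε))^2 * NB μ r n :=
        Summable.tsum_le_tsum hbound hsum_lhs hsum_rhs
    _ = (1/((K:ℝ)*ε)^2) * ∑' n : ℕ, ((n:ℝ) - (K:ℝ)*μ)^2 * NB μ r n := by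
        rw [← tsum_mul_left]
        exact tsum_congr fun n => by field_simp
    _ = (2 * μ * (μ + 7/2) / (7 * ε^2)) * (1 / (K:ℝ)) := by
        rw [← hm, var_NB hμ hr, hm]
        field_simp
/-- weak law of large numbers for the cluster user count:
for every `ε > 0`, `Σ_{n : |n − Kμ| > Kε} P_K(n) → 0` as `K → ∞`. -/
theorem Puser_concentration (μ : ℝ) (hμ : 0 < μ) (ε : ℝ) (hε : 0 < ε) :
    Filter.Tendsto
      (fun K : ℕ =>
        ∑' n : ℕ, if |(n : ℝ) - (K : ℝ) * μ| > (K : ℝ) * ε then Puser μ K n else 0)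
      Filter.atTop (nhds 0) := by
  apply squeeze_zero' (g := fun K : ℕ => (2 * μ * (μ + 7/2) / (7 * ε^2)) * (1 / (K:ℝ)))
  · filter_upwards [Filter.eventually_ge_atTop 1] with K hK
    have hK0 : (0:ℝ) < (K:ℝ) := by exact_mod_cast hK
    have hr : (0:ℝ) < (K:ℝ) * (7/2) := by positivity
    refine tsum_nonneg fun n => ?_
    by_cases hcase : |(n : ℝ) - (K : ℝ) * μ| > (K : ℝ) * ε
    · rw [if_pos hcase, Puser_eq_NB]
      exact (NB_pos hμ hr n).le
    · rw [if_neg hcase]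
  · filter_upwards [Filter.eventually_ge_atTop 1] with K hK
    exact tail_le hμ hε K hK
  · have := tendsto_one_div_atTop_nhds_zero_nat.const_mul (2 * μ * (μ + 7/2) / (7 * ε^2))
    simpa using this

end NBaux
end

section
/- (Proposition 1, over-provisioned case) Fix μ > 0, a = b = 7/2, and a real T̄ with T̄ > μ. Then the user blocking probability at equivalent per-RRU capacity T̄ vanishes in the large-cluster limit: lim_{K→∞} P_b(K, ⌊K·T̄⌋) = 0, where the limit is over positive integers K tending to infinity. -/
open scoped BigOperators

lemma gamma_prod (s : ℝ) (hs : 0 < s) (n : ℕ) :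
    Real.Gamma ((n : ℝ) + s) = (∏ i ∈ Finset.range n, (s + i)) * Real.Gamma s := by
  induction n with
  | zero => simp
  | succ n ih =>
    have h1 : ((n + 1 : ℕ) : ℝ) + s = ((n : ℝ) + s) + 1 := by push_cast; ring
    have h2 : (n : ℝ) + s ≠ 0 := by positivity
    rw [h1, Real.Gamma_add_one h2, ih, Finset.prod_range_succ]
    ring

lemma prod_le_choose (s : ℝ) (hs : 0 < s) (n : ℕ) :
    (∏ i ∈ Finset.range n, (s + i)) ≤
      (n.factorial : ℝ) * ((n + ⌈s⌉₊).choose ⌈s⌉₊ : ℝ) := by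
  set k := ⌈s⌉₊ with hk
  have h1 : (∏ i ∈ Finset.range n, (s + i)) ≤ ∏ i ∈ Finset.range n, ((k : ℝ) + 1 + i) := by
    apply Finset.prod_le_prod
    · intro i _; positivity
    · intro i _
      have : s ≤ (k : ℝ) := Nat.le_ceil s
      linarith
  have h2 : ∀ m : ℕ, (∏ i ∈ Finset.range m, ((k : ℝ) + 1 + i)) = ((k+1).ascFactorial m : ℝ) := by
    intro m
    induction m with
    | zero => simp
    | succ m ihm =>
      rw [Finset.prod_range_succ, ihm, Nat.ascFactorial_succ]
      push_cast; ring
  have h3 : (k+1).ascFactorial n = n.factorial * (k + n).choose n := by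
    rw [Nat.ascFactorial_eq_factorial_mul_choose]
  have h4 : (k + n).choose n = (n + k).choose k := by
    rw [Nat.add_comm k n]
    have := Nat.choose_symm (Nat.le_add_left k n)
    simpa [Nat.add_sub_cancel] using this
  calc (∏ i ∈ Finset.range n, (s + i)) ≤ _ := h1
    _ = ((k+1).ascFactorial n : ℝ) := h2 n
    _ = (n.factorial : ℝ) * ((n + k).choose k : ℝ) := by rw [h3, h4]; push_cast; ring

lemma Puser_eq (μ : ℝ) (hμ : 0 < μ) (K : ℕ) (hK : 1 ≤ K) (n : ℕ) :
    Puser μ K n = ((7/2) / (μ + 7/2)) ^ ((K : ℝ) * (7/2)) * (μ / (μ + 7/2)) ^ n *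
      (∏ i ∈ Finset.range n, ((K : ℝ) * (7/2) + i)) / (n.factorial : ℝ) := by
  set s : ℝ := (K : ℝ) * (7/2) with hsdef
  have hs : 0 < s := by
    have : (1:ℝ) ≤ (K:ℝ) := by exact_mod_cast hK
    positivity
  have hμb : (0:ℝ) < μ + 7/2 := by linarith
  have hΓ : 0 < Real.Gamma s := Real.Gamma_pos_of_pos hs
  have hfac : (0:ℝ) < (n.factorial : ℝ) := by exact_mod_cast n.factorial_pos
  rw [Puser, gamma_prod s hs n, Real.rpow_add hμb, Real.rpow_natCast,
    Real.div_rpow (by norm_num) hμb.le, div_pow]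
  have ha2 : (0:ℝ) < (μ + 7/2) ^ s := Real.rpow_pos_of_pos hμb _
  have ha3 : (0:ℝ) < (μ + 7/2) ^ n := by positivity
  generalize (7/2 : ℝ) ^ s = a1
  generalize hg2 : (μ + 7/2 : ℝ) ^ s = a2 at ha2 ⊢
  generalize hg3 : (μ + 7/2 : ℝ) ^ n = a3 at ha3 ⊢
  field_simp
  ring_nf
  try ac_rfl
  try ring

lemma Puser_nonneg (μ : ℝ) (hμ : 0 < μ) (K : ℕ) (hK : 1 ≤ K) (n : ℕ) :
    0 ≤ Puser μ K n := by
  rw [Puser_eq μ hμ K hK n]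
  have hs : (0:ℝ) < (K : ℝ) * (7/2) := by
    have : (1:ℝ) ≤ (K:ℝ) := by exact_mod_cast hK
    positivity
  have h1 : 0 ≤ ∏ i ∈ Finset.range n, ((K : ℝ) * (7/2) + i) :=
    Finset.prod_nonneg fun i _ => by positivity
  have h2 : (0:ℝ) < μ + 7/2 := by linarith
  positivity

lemma Puser_le (μ : ℝ) (hμ : 0 < μ) (K : ℕ) (hK : 1 ≤ K) (n : ℕ) :
    Puser μ K n ≤ ((7/2) / (μ + 7/2)) ^ ((K : ℝ) * (7/2)) *
      (((n + ⌈(K : ℝ) * (7/2)⌉₊).choose ⌈(K : ℝ) * (7/2)⌉₊ : ℝ) * (μ / (μ + 7/2)) ^ n) := by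
  rw [Puser_eq μ hμ K hK n]
  set s : ℝ := (K : ℝ) * (7/2) with hsdef
  have hs : 0 < s := by
    have : (1:ℝ) ≤ (K:ℝ) := by exact_mod_cast hK
    positivity
  have h2 : (0:ℝ) < μ + 7/2 := by linarith
  have hA : (0:ℝ) < ((7/2) / (μ + 7/2)) ^ s := Real.rpow_pos_of_pos (by positivity) _
  have hq : (0:ℝ) ≤ (μ / (μ + 7/2)) ^ n := by positivity
  have hfac : (0:ℝ) < (n.factorial : ℝ) := by exact_mod_cast n.factorial_pos
  rw [div_le_iff₀ hfac]
  have := prod_le_choose s hs n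
  calc ((7/2) / (μ + 7/2)) ^ s * (μ / (μ + 7/2)) ^ n * (∏ i ∈ Finset.range n, (s + i))
      ≤ ((7/2) / (μ + 7/2)) ^ s * (μ / (μ + 7/2)) ^ n *
        ((n.factorial : ℝ) * ((n + ⌈s⌉₊).choose ⌈s⌉₊ : ℝ)) := by
        apply mul_le_mul_of_nonneg_left this (by positivity)
    _ = ((7/2) / (μ + 7/2)) ^ s *
        (((n + ⌈s⌉₊).choose ⌈s⌉₊ : ℝ) * (μ / (μ + 7/2)) ^ n) * (n.factorial : ℝ) := by ring

lemma blockTerm_nonneg (μ : ℝ) (hμ : 0 < μ) (K : ℕ) (hK : 1 ≤ K) (T n : ℕ) :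
    0 ≤ blockTerm μ K T n := by
  rw [blockTerm]
  split_ifs with h
  · apply mul_nonneg _ (Puser_nonneg μ hμ K hK n)
    apply div_nonneg _ (Nat.cast_nonneg n)
    have : (T:ℝ) + 1 ≤ (n:ℝ) := by exact_mod_cast h
    linarith
  · exact le_refl 0

lemma Pblock_nonneg (μ : ℝ) (hμ : 0 < μ) (K : ℕ) (hK : 1 ≤ K) (T : ℕ) :
    0 ≤ Pblock μ K T :=
  tsum_nonneg (blockTerm_nonneg μ hμ K hK T)

lemma Pblock_le (μ : ℝ) (hμ : 0 < μ) (K : ℕ) (hK : 1 ≤ K) (T : ℕ) (z : ℝ) (hz : 1 < z)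
    (hx1 : z * (μ / (μ + 7/2)) < 1) :
    Pblock μ K T ≤ (z ^ (-((T:ℝ) + 1)) * ((7/2) / (μ + 7/2)) ^ ((K : ℝ) * (7/2))) *
      (1 / (1 - z * (μ / (μ + 7/2))) ^ (⌈(K : ℝ) * (7/2)⌉₊ + 1)) := by
  have hμb : (0:ℝ) < μ + 7/2 := by linarith
  set s : ℝ := (K : ℝ) * (7/2) with hsdef
  set k : ℕ := ⌈s⌉₊ with hkdef
  set q : ℝ := μ / (μ + 7/2) with hqdef
  set A : ℝ := (7/2) / (μ + 7/2) with hAdef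
  have hq0 : 0 < q := by positivity
  have hx0 : 0 ≤ z * q := by positivity
  have hz0 : (0:ℝ) < z := by linarith
  have hAs : 0 < A ^ s := Real.rpow_pos_of_pos (by positivity) _
  have hzT : 0 < z ^ (-((T:ℝ) + 1)) := Real.rpow_pos_of_pos hz0 _
  have hnorm : ‖z * q‖ < 1 := by rwa [Real.norm_eq_abs, abs_of_nonneg hx0]
  have hsum : HasSum (fun n : ℕ => ((n + k).choose k : ℝ) * (z * q) ^ n)
      (1 / (1 - z * q) ^ (k + 1)) := hasSum_choose_mul_geometric_of_norm_lt_one k hnorm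
  have hD : HasSum (fun n : ℕ => (z ^ (-((T:ℝ) + 1)) * A ^ s) *
      (((n + k).choose k : ℝ) * (z * q) ^ n))
      ((z ^ (-((T:ℝ) + 1)) * A ^ s) * (1 / (1 - z * q) ^ (k + 1))) :=
    hsum.mul_left _
  have hle : ∀ n : ℕ, blockTerm μ K T n ≤ (z ^ (-((T:ℝ) + 1)) * A ^ s) *
      (((n + k).choose k : ℝ) * (z * q) ^ n) := by
    intro n
    rw [blockTerm]
    split_ifs with h
    · have hn0 : (0:ℝ) < (n:ℝ) := by
        have : 1 ≤ n := le_trans (Nat.le_add_left 1 T) h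
        exact_mod_cast this
      have hfrac : ((n : ℝ) - (T : ℝ)) / (n : ℝ) ≤ 1 := by
        rw [div_le_one hn0]; have : (0:ℝ) ≤ (T:ℝ) := Nat.cast_nonneg T; linarith
      have step1 : (((n : ℝ) - (T : ℝ)) / (n : ℝ)) * Puser μ K n ≤ Puser μ K n :=
        mul_le_of_le_one_left (Puser_nonneg μ hμ K hK n) hfrac
      have step2 := Puser_le μ hμ K hK n
      have key : (1:ℝ) ≤ z ^ (-((T:ℝ) + 1)) * z ^ n := by
        have h2 : z ^ (-((T:ℝ) + 1)) = (z ^ (T+1 : ℕ))⁻¹ := by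
          rw [← Real.rpow_natCast z (T+1), ← Real.rpow_neg hz0.le]
          push_cast; ring_nf
        have h1 : z ^ (T+1) ≤ z ^ n := pow_le_pow_right₀ hz.le h
        rw [h2]
        have h3 := mul_le_mul_of_nonneg_left h1 (inv_nonneg.mpr (by positivity : (0:ℝ) ≤ z ^ (T+1)))
        rwa [inv_mul_cancel₀ (by positivity : (z:ℝ) ^ (T+1) ≠ 0)] at h3
      have step3 : A ^ s * (((n + k).choose k : ℝ) * q ^ n) ≤
          (z ^ (-((T:ℝ) + 1)) * A ^ s) * (((n + k).choose k : ℝ) * (z * q) ^ n) := by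
        calc A ^ s * (((n + k).choose k : ℝ) * q ^ n)
            = (A ^ s * ((n + k).choose k : ℝ) * q ^ n) * 1 := by ring
          _ ≤ (A ^ s * ((n + k).choose k : ℝ) * q ^ n) * (z ^ (-((T:ℝ) + 1)) * z ^ n) := by
              apply mul_le_mul_of_nonneg_left key (by positivity)
          _ = (z ^ (-((T:ℝ) + 1)) * A ^ s) * (((n + k).choose k : ℝ) * (z * q) ^ n) := by
              rw [mul_pow]; ring
      exact le_trans step1 (le_trans step2 step3)
    · positivity
  have hsummB : Summable (blockTerm μ K T) :=
    Summable.of_nonneg_of_le (blockTerm_nonneg μ hμ K hK T) hle hD.summable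
  calc Pblock μ K T ≤ ∑' n : ℕ, (z ^ (-((T:ℝ) + 1)) * A ^ s) *
        (((n + k).choose k : ℝ) * (z * q) ^ n) := Summable.tsum_le_tsum hle hsummB hD.summable
    _ = (z ^ (-((T:ℝ) + 1)) * A ^ s) * (1 / (1 - z * q) ^ (k + 1)) := hD.tsum_eq

set_option maxHeartbeats 1000000 in
/-- Proposition 1, over-provisioned case: if `T̄ > μ` then
`P_b(K, ⌊K·T̄⌋) → 0` as `K → ∞`. -/
theorem Pblock_limit_over (μ : ℝ) (hμ : 0 < μ) (Tbar : ℝ) (hT : Tbar > μ) :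
    Filter.Tendsto (fun K : ℕ => Pblock μ K ⌊(K : ℝ) * Tbar⌋₊)
      Filter.atTop (nhds 0) := by
  have hb : (0:ℝ) < 7/2 := by norm_num
  have hTb : 0 < Tbar := lt_trans hμ hT
  have hTμ : 0 < Tbar - μ := sub_pos.mpr hT
  have hμb : (0:ℝ) < μ + 7/2 := by linarith
  set ε : ℝ := (7/2) * (Tbar - μ) / (2 * μ * (Tbar + 7/2)) with hεdef
  have hε0 : 0 < ε := by positivity
  set z : ℝ := 1 + ε with hzdef
  have hz : 1 < z := by simp [hzdef]; linarith
  have hz0 : (0:ℝ) < z := by linarith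
  have hkey : ε * (μ * (Tbar + 7/2)) = (7/4) * (Tbar - μ) := by
    rw [hεdef]; field_simp; ring
  have hεμ : ε * μ < 7/2 := by nlinarith
  set q : ℝ := μ / (μ + 7/2) with hqdef
  have hq0 : 0 < q := by positivity
  have hx1 : z * q < 1 := by
    rw [hqdef, mul_div_assoc', div_lt_one hμb]
    nlinarith
  have hx0 : 0 < z * q := by positivity
  have h1x : 0 < 1 - z * q := by linarith
  have h1x1 : 1 - z * q < 1 := by linarith
  have hlog1x : Real.log (1 - z * q) < 0 := Real.log_neg h1x h1x1
  set A : ℝ := (7/2) / (μ + 7/2) with hAdef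
  have hA0 : 0 < A := by positivity
  set L : ℝ := -Tbar * Real.log z + (7/2) * (Real.log A - Real.log (1 - z * q)) with hLdef
  have hden : 0 < 7/2 - ε * μ := by linarith
  -- L < 0
  have hlz : ε / (1 + ε) ≤ Real.log z := by
    have h := Real.log_le_sub_one_of_pos (show (0:ℝ) < z⁻¹ by positivity)
    rw [Real.log_inv] at h
    have h2 : 1 - z⁻¹ = ε / (1 + ε) := by
      rw [hzdef]; field_simp; ring
    linarith
  have hAx : A / (1 - z * q) = (7/2) / (7/2 - ε * μ) := by
    rw [div_eq_div_iff (ne_of_gt h1x) (ne_of_gt hden), hAdef, hqdef, hzdef]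
    field_simp
    ring
  have hlA : Real.log A - Real.log (1 - z * q) ≤ ε * μ / (7/2 - ε * μ) := by
    rw [← Real.log_div (ne_of_gt hA0) (ne_of_gt h1x), hAx]
    have h := Real.log_le_sub_one_of_pos (show (0:ℝ) < (7/2) / (7/2 - ε * μ) by positivity)
    have h2 : (7/2) / (7/2 - ε * μ) - 1 = ε * μ / (7/2 - ε * μ) := by
      rw [div_sub_one (ne_of_gt hden)]
      congr 1
      ring
    linarith
  have hmain : (7/2) * (ε * μ / (7/2 - ε * μ)) < Tbar * (ε / (1 + ε)) := by
    rw [mul_div_assoc', mul_div_assoc', div_lt_div_iff₀ hden (by positivity)]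
    have hkey2 : ε * (ε * (μ * (Tbar + 7/2))) = ε * ((7/4) * (Tbar - μ)) := by rw [hkey]
    nlinarith [mul_pos hε0 hTμ]
  have hL0 : L < 0 := by
    have m1 : Tbar * (ε / (1 + ε)) ≤ Tbar * Real.log z :=
      mul_le_mul_of_nonneg_left hlz hTb.le
    have m2 : (7/2) * (Real.log A - Real.log (1 - z * q)) ≤ (7/2) * (ε * μ / (7/2 - ε * μ)) :=
      mul_le_mul_of_nonneg_left hlA (by norm_num)
    rw [hLdef]; linarith
  -- eventual upper bound
  have hupper : ∀ K : ℕ, 1 ≤ K → Pblock μ K ⌊(K : ℝ) * Tbar⌋₊ ≤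
      Real.exp (-2 * Real.log (1 - z * q)) * Real.exp L ^ K := by
    intro K hK
    set T : ℕ := ⌊(K : ℝ) * Tbar⌋₊ with hTdef
    set s : ℝ := (K : ℝ) * (7/2) with hsdef
    set k : ℕ := ⌈s⌉₊ with hkdef
    have hK1 : (1:ℝ) ≤ (K:ℝ) := by exact_mod_cast hK
    have hs : 0 < s := by rw [hsdef]; positivity
    have h1 := Pblock_le μ hμ K hK T z hz hx1
    have e1 : z ^ (-((T:ℝ) + 1)) ≤ Real.exp (-((K:ℝ) * Tbar) * Real.log z) := by
      rw [Real.rpow_def_of_pos hz0]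
      apply Real.exp_le_exp.mpr
      have hTfl : (K:ℝ) * Tbar ≤ (T:ℝ) + 1 := (Nat.lt_floor_add_one ((K:ℝ) * Tbar)).le
      have hlz0 : 0 ≤ Real.log z := Real.log_nonneg hz.le
      nlinarith [mul_le_mul_of_nonneg_right hTfl hlz0]
    have e2 : A ^ s = Real.exp (s * Real.log A) := by
      rw [Real.rpow_def_of_pos hA0, mul_comm]
    have e3 : (1:ℝ) / (1 - z * q) ^ (k + 1) ≤ Real.exp (-(s + 2) * Real.log (1 - z * q)) := by
      have hpow : (1 - z * q) ^ (k + 1) = Real.exp (((k:ℝ) + 1) * Real.log (1 - z * q)) := by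
        rw [← Real.exp_log (pow_pos h1x (k + 1)), Real.log_pow]
        push_cast; ring_nf
      rw [hpow, one_div, ← Real.exp_neg]
      apply Real.exp_le_exp.mpr
      have hkle : (k:ℝ) + 1 ≤ s + 2 := by
        have := Nat.ceil_lt_add_one hs.le
        rw [← hkdef] at this
        linarith
      nlinarith
    calc Pblock μ K T ≤ (z ^ (-((T:ℝ) + 1)) * A ^ s) * ((1:ℝ) / (1 - z * q) ^ (k + 1)) := h1
      _ ≤ (Real.exp (-((K:ℝ) * Tbar) * Real.log z) * Real.exp (s * Real.log A)) *
            Real.exp (-(s + 2) * Real.log (1 - z * q)) := by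
          have hAs : 0 < A ^ s := Real.rpow_pos_of_pos hA0 _
          apply mul_le_mul _ e3 (by positivity) (by positivity)
          rw [e2]
          exact mul_le_mul_of_nonneg_right e1 (Real.exp_nonneg _)
      _ = Real.exp (-2 * Real.log (1 - z * q)) * Real.exp L ^ K := by
          rw [← Real.exp_add, ← Real.exp_add, ← Real.exp_nat_mul, ← Real.exp_add,
            Real.exp_eq_exp]
          rw [hLdef, hsdef]
          ring
  -- squeeze
  have hlow : ∀ K : ℕ, 1 ≤ K → 0 ≤ Pblock μ K ⌊(K : ℝ) * Tbar⌋₊ := fun K hK =>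
    Pblock_nonneg μ hμ K hK _
  have htop : Filter.Tendsto (fun K : ℕ =>
      Real.exp (-2 * Real.log (1 - z * q)) * Real.exp L ^ K) Filter.atTop (nhds 0) := by
    have h := tendsto_pow_atTop_nhds_zero_of_lt_one (Real.exp_nonneg L)
      (Real.exp_lt_one_iff.mpr hL0)
    simpa using h.const_mul (Real.exp (-2 * Real.log (1 - z * q)))
  apply tendsto_of_tendsto_of_tendsto_of_le_of_le' tendsto_const_nhds htop
  · exact Filter.eventually_atTop.mpr ⟨1, hlow⟩
  · exact Filter.eventually_atTop.mpr ⟨1, hupper⟩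
end
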